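/- For the map f : ℝ³ → ℝ⁴, f(y,z,t) = (2t + t³/3, y, z, t), at every point of its image the vector field ξ = (2/(√5(2+t²))) e₁ + (2t/(√5(2+t²))) e₂ + (t²/(√5(2+t²))) e₃ − (2/√5) e₄ is a unit vector orthogonal (with respect to g̃) to each of the three coordinate tangent vectors ∂f/∂y, ∂f/∂z, ∂f/∂t of the parametrized hypersurface; that is, ξ is a unit normal field along f. -/

import Mathlib

noncomputable section

/-- The left-invariant frame fields e₁,e₂,e₃,e₄ on ℝ⁴ (coordinates x,y,z,t = p 0,...,p 3). -/
def eVF (i : Fin 4) (p : Fin 4 → ℝ) : Fin 4 → ℝ :=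
  ![![1, 0, 0, 0],
    ![p 3, 1, 0, 0],
    ![(p 3) ^ 2 / 2, p 3, 1, 0],
    ![0, 0, 0, 1]] i

/-- The matrix of the metric g̃ at a point with last coordinate t. -/
def gMat (t : ℝ) : Matrix (Fin 4) (Fin 4) ℝ :=
  !![1, -t, t ^ 2 / 2, 0;
     -t, 1 + t ^ 2, -t * (1 + t ^ 2 / 2), 0;
     t ^ 2 / 2, -t * (1 + t ^ 2 / 2), 1 + t ^ 2 + t ^ 4 / 4, 0;
     0, 0, 0, 1]

/-- The metric g̃ as a bilinear form on each tangent space. -/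
def gMet (p X Y : Fin 4 → ℝ) : ℝ :=
  ∑ i, ∑ j, gMat (p 3) i j * X i * Y j

/-- Partial derivative in direction of the i-th coordinate. -/
def pd (i : Fin 4) (f : (Fin 4 → ℝ) → ℝ) (p : Fin 4 → ℝ) : ℝ :=
  deriv (fun s => f (Function.update p i s)) (p i)

/-- The Christoffel symbols Γᵏᵢⱼ of g̃. -/
def Chr (p : Fin 4 → ℝ) (k i j : Fin 4) : ℝ :=
  (1 / 2) * ∑ l, (gMat (p 3))⁻¹ k l *
    (pd i (fun q => gMat (q 3) j l) p + pd j (fun q => gMat (q 3) i l) p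
      - pd l (fun q => gMat (q 3) i j) p)

/-- The Levi-Civita connection of g̃ in coordinates. -/
def nabla (X Y : (Fin 4 → ℝ) → (Fin 4 → ℝ)) (p : Fin 4 → ℝ) : Fin 4 → ℝ :=
  fun k => (∑ i, X p i * pd i (fun q => Y q k) p)
    + ∑ i, ∑ j, Chr p k i j * X p i * Y p j

/-- Lie bracket of vector fields on ℝ⁴. -/
def bracket (X Y : (Fin 4 → ℝ) → (Fin 4 → ℝ)) (p : Fin 4 → ℝ) : Fin 4 → ℝ :=
  fderiv ℝ Y p (X p) - fderiv ℝ X p (Y p)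

/-- The curvature tensor R̃(X,Y)Z = ∇̃_X ∇̃_Y Z − ∇̃_Y ∇̃_X Z − ∇̃_{[X,Y]} Z. -/
def Riem (X Y Z : (Fin 4 → ℝ) → (Fin 4 → ℝ)) (p : Fin 4 → ℝ) : Fin 4 → ℝ :=
  nabla X (nabla Y Z) p - nabla Y (nabla X Z) p - nabla (bracket X Y) Z p

/-- The parametrization f(y,z,t) = (2t + t³/3, y, z, t) of the example hypersurface. -/
def fex (u : Fin 3 → ℝ) : Fin 4 → ℝ :=
  ![2 * u 2 + (u 2) ^ 3 / 3, u 0, u 1, u 2]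

/-- The unit normal field of the example minimal hypersurface. -/
def ξex (p : Fin 4 → ℝ) : Fin 4 → ℝ :=
  (2 / (Real.sqrt 5 * (2 + (p 3) ^ 2))) • eVF 0 p
    + (2 * p 3 / (Real.sqrt 5 * (2 + (p 3) ^ 2))) • eVF 1 p
    + ((p 3) ^ 2 / (Real.sqrt 5 * (2 + (p 3) ^ 2))) • eVF 2 p
    - (2 / Real.sqrt 5) • eVF 3 p

/-- The total derivative of `fex`. -/
def Lmap (u : Fin 3 → ℝ) : (Fin 3 → ℝ) →L[ℝ] (Fin 4 → ℝ) :=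
  ContinuousLinearMap.pi
    ![(2 + u 2 ^ 2) • ContinuousLinearMap.proj 2,
      ContinuousLinearMap.proj 0,
      ContinuousLinearMap.proj 1,
      ContinuousLinearMap.proj 2]

lemma hfd (u : Fin 3 → ℝ) : HasFDerivAt fex (Lmap u) u := by
  have : fex = fun u k => ![2 * u 2 + (u 2) ^ 3 / 3, u 0, u 1, u 2] k := rfl
  rw [this, Lmap, hasFDerivAt_pi]
  intro k
  fin_cases k <;> simp
  · have h2 : HasFDerivAt (fun u : Fin 3 → ℝ => u 2)
        (ContinuousLinearMap.proj 2 : (Fin 3 → ℝ) →L[ℝ] ℝ) u := hasFDerivAt_apply 2 u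
    have heq : (fun u : Fin 3 → ℝ => 2 * u 2 + u 2 ^ 3 / 3)
        = fun u : Fin 3 → ℝ => 2 * u 2 + (1/3 : ℝ) * (u 2 * (u 2 * u 2)) := by
      funext v; ring
    rw [heq]
    have := ((h2.const_mul 2).add ((h2.mul (h2.mul h2)).const_mul (1/3 : ℝ)))
    convert this using 1
    ext v
    simp [ContinuousLinearMap.proj]
    ring
    ext v
    simp [ContinuousLinearMap.proj]
    ring
  · exact hasFDerivAt_apply 0 u
  · exact hasFDerivAt_apply 1 u
  · exact hasFDerivAt_apply 2 u

lemma sqrt5_sq : Real.sqrt 5 * Real.sqrt 5 = 5 :=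
  Real.mul_self_sqrt (by norm_num)

lemma sqrt5_ne : Real.sqrt 5 ≠ 0 := by
  positivity

lemma denom_ne (t : ℝ) : (2 + t ^ 2) ≠ 0 := by positivity

lemma xi_eq (p : Fin 4 → ℝ) :
    ξex p = (Real.sqrt 5)⁻¹ • ![(2 + (p 3) ^ 2) / 2, p 3,
      (p 3) ^ 2 / (2 + (p 3) ^ 2), -2] := by
  have h5n := sqrt5_ne
  have hdn := denom_ne (p 3)
  funext j
  fin_cases j <;>
    simp [ξex, eVF] <;> field_simp <;> ring

lemma Lsingle0 (u : Fin 3 → ℝ) : Lmap u (Pi.single 0 1) = ![0, 1, 0, 0] := by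
  funext j; fin_cases j <;> simp [Lmap, Pi.single, Function.update]

lemma Lsingle1 (u : Fin 3 → ℝ) : Lmap u (Pi.single 1 1) = ![0, 0, 1, 0] := by
  funext j; fin_cases j <;> simp [Lmap, Pi.single, Function.update]

lemma Lsingle2 (u : Fin 3 → ℝ) : Lmap u (Pi.single 2 1) = ![2 + u 2 ^ 2, 0, 0, 1] := by
  funext j; fin_cases j <;> simp [Lmap, Pi.single, Function.update]

lemma fex3 (u : Fin 3 → ℝ) : fex u 3 = u 2 := rfl

lemma gMet_smul_smul (p X Y : Fin 4 → ℝ) (c : ℝ) :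
    gMet p (c • X) (c • Y) = c ^ 2 * gMet p X Y := by
  simp only [gMet, Fin.sum_univ_four, Pi.smul_apply, smul_eq_mul]; ring

lemma gMet_smul_right (p X Y : Fin 4 → ℝ) (c : ℝ) :
    gMet p X (c • Y) = c * gMet p X Y := by
  simp only [gMet, Fin.sum_univ_four, Pi.smul_apply, smul_eq_mul]; ring

lemma inv_sqrt5_sq : (Real.sqrt 5)⁻¹ ^ 2 = 1 / 5 := by
  rw [← Real.sqrt_inv, Real.sq_sqrt] <;> norm_num

/-- Along f, the field ξ has unit g̃-length and is g̃-orthogonal to the three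
coordinate tangent vectors ∂f/∂y, ∂f/∂z, ∂f/∂t: it is a unit normal field. -/
theorem nil4_example_unit_normal : ∀ u : Fin 3 → ℝ,
    gMet (fex u) (ξex (fex u)) (ξex (fex u)) = 1 ∧
    (∀ i : Fin 3,
      gMet (fex u) (fderiv ℝ fex u (Pi.single i 1)) (ξex (fex u)) = 0) := by
  intro u
  have hL : fderiv ℝ fex u = Lmap u := (hfd u).fderiv
  have hdn := denom_ne (u 2)
  constructor
  · rw [xi_eq, gMet_smul_smul, inv_sqrt5_sq]
    simp only [gMet, Fin.sum_univ_four, gMat, fex3]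
    simp only [Matrix.of_apply, Matrix.cons_val]
    norm_num [Matrix.cons_val_zero, Matrix.cons_val_one, Matrix.head_cons, Matrix.cons_val]
    field_simp
    ring
  · intro i
    rw [hL, xi_eq, gMet_smul_right]
    fin_cases i
    · rw [show (Pi.single ((fun i => i) (⟨0, by norm_num⟩ : Fin 3)) 1 : Fin 3 → ℝ) = Pi.single 0 1 from rfl, Lsingle0]
      simp only [gMet, Fin.sum_univ_four, gMat, fex3]
      simp only [Matrix.of_apply, Matrix.cons_val]
      norm_num [Matrix.cons_val_zero, Matrix.cons_val_one, Matrix.head_cons, Matrix.cons_val]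
      field_simp
      ring
    · rw [show (Pi.single ((fun i => i) (⟨1, by norm_num⟩ : Fin 3)) 1 : Fin 3 → ℝ) = Pi.single 1 1 from rfl, Lsingle1]
      simp only [gMet, Fin.sum_univ_four, gMat, fex3]
      simp only [Matrix.of_apply, Matrix.cons_val]
      norm_num [Matrix.cons_val_zero, Matrix.cons_val_one, Matrix.head_cons, Matrix.cons_val]
      field_simp
      ring
    · rw [show (Pi.single ((fun i => i) (⟨2, by norm_num⟩ : Fin 3)) 1 : Fin 3 → ℝ) = Pi.single 2 1 from rfl, Lsingle2]
      simp only [gMet, Fin.sum_univ_four, gMat, fex3]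
      simp only [Matrix.of_apply, Matrix.cons_val]
      norm_num [Matrix.cons_val_zero, Matrix.cons_val_one, Matrix.head_cons, Matrix.cons_val]
      field_simp
      ring
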